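/- arXiv:1912.13473 — 5 statements merged into one kernel-verified Lean document; each statement's English description precedes it below -/
import Mathlib

section
/- Let k be a field, K a group, K' a normal subgroup of K, and (ρ, V) a simple k-linear representation of K (i.e. V is a simple k[K]-module) such that the subgroup K'·ker(ρ) has finite index in K, where ker(ρ) = {g ∈ K : ρ(g) = id_V}. Then V, viewed as a k[K']-module, is semisimple. -/
open MonoidAlgebra

namespace CliffordAux
set_option linter.unusedSectionVars false

variable {k K V : Type} [Field k] [Group K] {K' : Subgroup K} [K'.Normal]
  [AddCommGroup V] [Module k V] (ρ : Representation k K V)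

local notation "N" => Representation.asModule (ρ.comp K'.subtype)
local notation "B" => MonoidAlgebra k K'

lemma of_smul (x : K') (v : N) : (of k K' x) • v = ρ (x : K) v := by
  show Representation.asAlgebraHom (ρ.comp K'.subtype) (of k K' x) v = _
  rw [Representation.asAlgebraHom_of]
  rfl

lemma alg_smul (c : k) (v : N) : (algebraMap k (MonoidAlgebra k K') c) • v = c • v := by
  show Representation.asAlgebraHom (ρ.comp K'.subtype) (algebraMap k (MonoidAlgebra k K') c) v = _
  rw [AlgHom.commutes]
  rfl

lemma ksmul_smul (c : k) (b : B) (v : N) : (c • b) • v = c • (b • v) := by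
  show Representation.asAlgebraHom (ρ.comp K'.subtype) (c • b) v = _
  rw [map_smul]
  rfl

lemma mem_k_smul (q : Submodule B N) (c : k) {v : N} (h : v ∈ q) : c • v ∈ q := by
  rw [← alg_smul]
  exact q.smul_mem _ h

lemma mem_rho (q : Submodule B N) (x : K') {v : N} (h : v ∈ q) : ρ (x : K) v ∈ q := by
  rw [← of_smul]
  exact q.smul_mem _ h

/-- Build a `MonoidAlgebra k K'`-submodule from a `K'`-stable `k`-subspace. -/
def mkSub (p : Submodule k V) (hp : ∀ (x : K'), ∀ v ∈ p, ρ (x : K) v ∈ p) : Submodule B N where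
  carrier := (p : Set V)
  add_mem' := fun ha hb => p.add_mem ha hb
  zero_mem' := p.zero_mem
  smul_mem' := by
    intro b v hv
    induction b using MonoidAlgebra.induction_on with
    | of x => rw [of_smul]; exact hp x v hv
    | add b₁ b₂ h₁ h₂ => rw [add_smul]; exact p.add_mem h₁ h₂
    | smul c b h => rw [ksmul_smul]; exact p.smul_mem c h


/-- Conjugate of a submodule of the restriction, by an element `g : K`. -/
def conj (g : K) (q : Submodule B N) : Submodule B N :=
  mkSub ρ
    { carrier := {v : V | ρ g⁻¹ v ∈ q}
      zero_mem' := by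
        simp only [Set.mem_setOf_eq, map_zero]
        exact q.zero_mem
      add_mem' := fun {a b} ha hb => by
        simp only [Set.mem_setOf_eq, map_add]
        exact q.add_mem ha hb
      smul_mem' := fun c v hv => by
        simp only [Set.mem_setOf_eq, map_smul]
        exact mem_k_smul ρ q c hv }
    (by
      intro x v hv
      show ρ g⁻¹ (ρ (x : K) v) ∈ q
      have h1 : ρ g⁻¹ (ρ (x : K) v) = ρ ((g⁻¹ * x * g : K)) (ρ g⁻¹ v) := by
        rw [← Module.End.mul_apply, ← map_mul, ← Module.End.mul_apply, ← map_mul]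
        congr 1
        group
      rw [h1]
      have hx : (g⁻¹ * (x : K) * g) ∈ K' := by
        simpa using Subgroup.Normal.conj_mem ‹K'.Normal› (x : K) x.2 g⁻¹
      exact mem_rho ρ q ⟨g⁻¹ * (x : K) * g, hx⟩ hv)

lemma mem_conj {g : K} {q : Submodule B N} {v : N} : v ∈ conj ρ g q ↔ ρ g⁻¹ v ∈ q := Iff.rfl

lemma rho_mul_apply (g h : K) (v : V) : ρ g (ρ h v) = ρ (g * h) v := by
  rw [map_mul]; rfl

lemma conj_conj (g g' : K) (q : Submodule B N) : conj ρ g (conj ρ g' q) = conj ρ (g * g') q := by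
  ext v
  show ρ g'⁻¹ (ρ g⁻¹ v) ∈ q ↔ ρ (g * g')⁻¹ v ∈ q
  erw [rho_mul_apply, mul_inv_rev]

lemma conj_one (q : Submodule B N) : conj ρ 1 q = q := by
  ext v
  rw [mem_conj, inv_one, map_one]
  rfl

lemma conj_mono (g : K) {q q' : Submodule B N} (h : q ≤ q') : conj ρ g q ≤ conj ρ g q' :=
  fun _ hv => h hv

/-- Conjugation as an order isomorphism of the submodule lattice. -/
def conjIso (g : K) : Submodule B N ≃o Submodule B N where
  toFun := conj ρ g
  invFun := conj ρ g⁻¹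
  left_inv := fun q => by rw [conj_conj, inv_mul_cancel, conj_one]
  right_inv := fun q => by rw [conj_conj, mul_inv_cancel, conj_one]
  map_rel_iff' := by
    intro q q'
    constructor
    · intro h
      replace h : conj ρ g q ≤ conj ρ g q' := h
      have h2 := conj_mono ρ g⁻¹ h
      rwa [conj_conj, inv_mul_cancel, conj_one, conj_conj, inv_mul_cancel, conj_one] at h2
    · exact conj_mono ρ g

lemma conj_eq_self {h : K} (hh : h ∈ K' ⊔ MonoidHom.ker ρ) (q : Submodule B N) :
    conj ρ h q = q := by
  let S : Subgroup K :=
    { carrier := {g : K | conj ρ g q = q}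
      one_mem' := conj_one ρ q
      mul_mem' := by
        intro a b ha hb
        show conj ρ (a * b) q = q
        rw [← conj_conj, hb, ha]
      inv_mem' := by
        intro a ha
        show conj ρ a⁻¹ q = q
        conv_lhs => rw [← ha]
        rw [conj_conj, inv_mul_cancel, conj_one] }
  have hle : K' ⊔ MonoidHom.ker ρ ≤ S := by
    apply sup_le
    · intro x hx
      show conj ρ x q = q
      ext v
      rw [mem_conj]
      constructor
      · intro hv
        have h2 := mem_rho ρ q ⟨x, hx⟩ hv
        erw [rho_mul_apply, mul_inv_cancel, map_one, Module.End.one_apply] at h2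
        exact h2
      · intro hv
        exact mem_rho ρ q ⟨x⁻¹, K'.inv_mem hx⟩ hv
    · intro x hx
      show conj ρ x q = q
      ext v
      rw [mem_conj]
      have hker : ρ x⁻¹ = 1 := MonoidHom.mem_ker.mp ((MonoidHom.ker ρ).inv_mem hx)
      erw [hker, Module.End.one_apply]
      exact Iff.rfl
  exact hle hh

lemma conj_span (g : K) (v : N) :
    conj ρ g (Submodule.span B {v}) = Submodule.span B ({ρ g v} : Set N) := by
  apply le_antisymm
  · have h1 : Submodule.span B {v} ≤ conj ρ g⁻¹ (Submodule.span B ({ρ g v} : Set N)) := by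
      rw [Submodule.span_le, Set.singleton_subset_iff]
      show ρ g⁻¹⁻¹ v ∈ Submodule.span B ({ρ g v} : Set N)
      rw [inv_inv]
      exact Submodule.subset_span (Set.mem_singleton _)
    have h2 := conj_mono ρ g h1
    rwa [conj_conj, mul_inv_cancel, conj_one] at h2
  · rw [Submodule.span_le]; refine Set.singleton_subset_iff.mpr ?_
    show ρ g⁻¹ (ρ g v) ∈ Submodule.span B {v}
    erw [rho_mul_apply, inv_mul_cancel, map_one, Module.End.one_apply]
    exact Submodule.subset_span (Set.mem_singleton _)

lemma of_smulM (g : K) (v : ρ.asModule) : (of k K g) • v = ρ g v := by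
  show ρ.asAlgebraHom (of k K g) v = _
  rw [Representation.asAlgebraHom_of]

lemma ksmulM (c : k) (b : MonoidAlgebra k K) (v : ρ.asModule) : (c • b) • v = c • (b • v) := by
  show ρ.asAlgebraHom (c • b) v = _
  rw [map_smul]
  rfl

lemma bot_or_top (q : Submodule B N) (hq : ∀ g : K, conj ρ g q = q)
    (hsimple : IsSimpleModule (MonoidAlgebra k K) ρ.asModule) : q = ⊥ ∨ q = ⊤ := by
  let qA : Submodule (MonoidAlgebra k K) ρ.asModule :=
    { carrier := {v : V | v ∈ q}
      add_mem' := fun ha hb => q.add_mem ha hb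
      zero_mem' := q.zero_mem
      smul_mem' := by
        intro b v hv
        induction b using MonoidAlgebra.induction_on with
        | of g =>
          rw [of_smulM]
          have h3 : v ∈ conj ρ g⁻¹ q := by rw [hq g⁻¹]; exact hv
          have h4 : ρ g⁻¹⁻¹ v ∈ q := h3
          rwa [inv_inv] at h4
        | add b₁ b₂ h₁ h₂ => rw [add_smul]; exact q.add_mem h₁ h₂
        | smul c b hb => rw [ksmulM]; exact mem_k_smul ρ q c hb }
  haveI := hsimple
  rcases eq_bot_or_eq_top qA with h | h
  · left
    rw [Submodule.eq_bot_iff]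
    intro v hv
    have h2 : v ∈ qA := hv
    rw [h] at h2
    exact (Submodule.mem_bot (M := ρ.asModule) (MonoidAlgebra k K)).mp h2
  · right
    rw [Submodule.eq_top_iff']
    intro v
    have h2 : (show ρ.asModule from v) ∈ qA := by rw [h]; exact Submodule.mem_top
    exact h2


lemma conj_mul_out (q : Submodule B N) (g : K) (c : K ⧸ (K' ⊔ MonoidHom.ker ρ)) :
    conj ρ (g * Quotient.out c) q = conj ρ (Quotient.out (g • c)) q := by
  have h1 : (QuotientGroup.mk (Quotient.out (g • c)) : K ⧸ (K' ⊔ MonoidHom.ker ρ)) =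
      QuotientGroup.mk (g * Quotient.out c) := by
    rw [QuotientGroup.out_eq', ← MulAction.Quotient.mk_smul_out, smul_eq_mul]
  have h2 : (Quotient.out (g • c))⁻¹ * (g * Quotient.out c) ∈ K' ⊔ MonoidHom.ker ρ :=
    QuotientGroup.eq.mp h1
  conv_lhs => rw [← mul_inv_cancel_left (Quotient.out (g • c)) (g * Quotient.out c)]
  rw [← conj_conj, conj_eq_self ρ h2]

lemma conj_iSup_out (q : Submodule B N) (g : K) :
    conj ρ g (⨆ c : K ⧸ (K' ⊔ MonoidHom.ker ρ), conj ρ (Quotient.out c) q) =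
      ⨆ c : K ⧸ (K' ⊔ MonoidHom.ker ρ), conj ρ (Quotient.out c) q := by
  have h0 : conj ρ g (⨆ c : K ⧸ (K' ⊔ MonoidHom.ker ρ), conj ρ (Quotient.out c) q) =
      ⨆ c : K ⧸ (K' ⊔ MonoidHom.ker ρ), conj ρ g (conj ρ (Quotient.out c) q) :=
    (conjIso ρ g).map_iSup _
  rw [h0]
  simp_rw [conj_conj, conj_mul_out]
  exact Equiv.iSup_comp (g := fun c => conj ρ (Quotient.out c) q) (MulAction.toPerm g : Equiv.Perm (K ⧸ (K' ⊔ MonoidHom.ker ρ)))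

lemma conj_iInf_out (q : Submodule B N) (g : K) :
    conj ρ g (⨅ c : K ⧸ (K' ⊔ MonoidHom.ker ρ), conj ρ (Quotient.out c) q) =
      ⨅ c : K ⧸ (K' ⊔ MonoidHom.ker ρ), conj ρ (Quotient.out c) q := by
  have h0 : conj ρ g (⨅ c : K ⧸ (K' ⊔ MonoidHom.ker ρ), conj ρ (Quotient.out c) q) =
      ⨅ c : K ⧸ (K' ⊔ MonoidHom.ker ρ), conj ρ g (conj ρ (Quotient.out c) q) :=
    (conjIso ρ g).map_iInf _
  rw [h0]
  simp_rw [conj_conj, conj_mul_out]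
  exact Equiv.iInf_comp (g := fun c => conj ρ (Quotient.out c) q) (MulAction.toPerm g : Equiv.Perm (K ⧸ (K' ⊔ MonoidHom.ker ρ)))

lemma out_one_mem : Quotient.out (1 : K ⧸ (K' ⊔ MonoidHom.ker ρ)) ∈ K' ⊔ MonoidHom.ker ρ :=
  (QuotientGroup.eq_one_iff _).mp (QuotientGroup.out_eq' 1)

end CliffordAux

lemma pi_isSemisimpleModule {R ι : Type*} [Ring R] [Finite ι] (M : ι → Type*)
    [∀ i, AddCommGroup (M i)] [∀ i, Module R (M i)] [∀ i, IsSemisimpleModule R (M i)] :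
    IsSemisimpleModule R (∀ i, M i) := by
  classical
  exact isSemisimpleModule_of_isSemisimpleModule_submodule'
    (p := fun i => LinearMap.range (LinearMap.single R M i))
    (fun i => .range _) (LinearMap.iSup_range_single R M)

lemma isSemisimpleModule_of_isSimpleModule {R M : Type*} [Ring R] [AddCommGroup M] [Module R M]
    [IsSimpleModule R M] : IsSemisimpleModule R M :=
  IsSemisimpleModule.of_sSup_simples_eq_top <| top_unique <| le_sSup
    (show IsSimpleModule R (⊤ : Submodule R M) from .congr Submodule.topEquiv)

/-!
STATEMENT 3: Let `k` be a field, `K` a group, `K'` a normal subgroup of `K`, and `(ρ, V)` a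
simple `k`-linear representation of `K` such that the subgroup `K' · ker ρ` (which, since `K'`
is normal, is the join `K' ⊔ ker ρ`) has finite index in `K`, where
`ker ρ = {g : K | ρ g = id_V}`.  Then `V`, viewed as a `k[K']`-module, is semisimple.
-/

open CliffordAux in
theorem restriction_semisimple_of_finite_index_ker
    (k : Type) [Field k] (K : Type) [Group K] (K' : Subgroup K) [K'.Normal]
    (V : Type) [AddCommGroup V] [Module k V]
    (ρ : Representation k K V)
    (hsimple : IsSimpleModule (MonoidAlgebra k K) ρ.asModule)
    (hindex : (K' ⊔ MonoidHom.ker ρ).FiniteIndex) :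
    IsSemisimpleModule (MonoidAlgebra k K') (Representation.asModule (ρ.comp K'.subtype)) := by
  classical
  haveI := hsimple
  haveI := hindex
  haveI : Finite (K ⧸ (K' ⊔ MonoidHom.ker ρ)) :=
    (K' ⊔ MonoidHom.ker ρ).finite_quotient_of_finiteIndex
  have hnt : Nontrivial V := IsSimpleModule.nontrivial (MonoidAlgebra k K) ρ.asModule
  haveI : Nontrivial (Representation.asModule (ρ.comp K'.subtype)) := hnt
  obtain ⟨v, hv⟩ := exists_ne (0 : Representation.asModule (ρ.comp K'.subtype))
  -- finite generation
  set Bspan : Submodule (MonoidAlgebra k K') (Representation.asModule (ρ.comp K'.subtype)) :=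
    Submodule.span (MonoidAlgebra k K') {v} with hBspan
  set F := ⨆ c : K ⧸ (K' ⊔ MonoidHom.ker ρ), conj ρ (Quotient.out c) Bspan with hF
  have hFtop : F = ⊤ := by
    rcases bot_or_top ρ F (fun g => conj_iSup_out ρ Bspan g) hsimple with h | h
    · exfalso
      have hvF : v ∈ F := by
        have h1 : conj ρ (Quotient.out (1 : K ⧸ (K' ⊔ MonoidHom.ker ρ))) Bspan = Bspan :=
          conj_eq_self ρ (out_one_mem ρ) Bspan
        have h2 : v ∈ conj ρ (Quotient.out (1 : K ⧸ (K' ⊔ MonoidHom.ker ρ))) Bspan := by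
          rw [h1]
          exact Submodule.subset_span (Set.mem_singleton _)
        exact le_iSup (fun c => conj ρ (Quotient.out c) Bspan) _ h2
      rw [h] at hvF
      exact hv (by simpa using hvF)
    · exact h
  have hfg : (⊤ : Submodule (MonoidAlgebra k K')
      (Representation.asModule (ρ.comp K'.subtype))).FG := by
    rw [← hFtop, hF]
    apply Submodule.fg_iSup
    intro c
    rw [hBspan, conj_span]
    exact Submodule.fg_span_singleton _
  haveI : IsCoatomic (Submodule (MonoidAlgebra k K')
      (Representation.asModule (ρ.comp K'.subtype))) :=
    CompleteLattice.coatomic_of_top_compact ((Submodule.fg_iff_compact _).mp hfg)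
  obtain ⟨U, hU⟩ := IsCoatomic.exists_coatom
    (α := Submodule (MonoidAlgebra k K') (Representation.asModule (ρ.comp K'.subtype)))
  set N0 := ⨅ c : K ⧸ (K' ⊔ MonoidHom.ker ρ), conj ρ (Quotient.out c) U with hN0
  have hN0bot : N0 = ⊥ := by
    rcases bot_or_top ρ N0 (fun g => conj_iInf_out ρ U g) hsimple with h | h
    · exact h
    · exfalso
      apply hU.1
      have h1 : N0 ≤ U := by
        have h2 := iInf_le (fun c : K ⧸ (K' ⊔ MonoidHom.ker ρ) => conj ρ (Quotient.out c) U) 1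
        rwa [conj_eq_self ρ (out_one_mem ρ)] at h2
      rw [h] at h1
      exact top_unique h1
  -- embedding into a finite product of simple modules
  set f : Representation.asModule (ρ.comp K'.subtype) →ₗ[MonoidAlgebra k K']
      ((c : K ⧸ (K' ⊔ MonoidHom.ker ρ)) →
        Representation.asModule (ρ.comp K'.subtype) ⧸ conj ρ (Quotient.out c) U) :=
    LinearMap.pi (fun c => (conj ρ (Quotient.out c) U).mkQ) with hf
  have hker : LinearMap.ker f = ⊥ := by
    rw [hf, LinearMap.ker_pi]
    simp_rw [Submodule.ker_mkQ]
    exact hN0bot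
  haveI : ∀ c : K ⧸ (K' ⊔ MonoidHom.ker ρ),
      IsSimpleModule (MonoidAlgebra k K')
        (Representation.asModule (ρ.comp K'.subtype) ⧸ conj ρ (Quotient.out c) U) := by
    intro c
    rw [isSimpleModule_iff_isCoatom]
    exact (OrderIso.isCoatom_iff (conjIso ρ (Quotient.out c)) U).mpr hU
  haveI : ∀ c : K ⧸ (K' ⊔ MonoidHom.ker ρ),
      IsSemisimpleModule (MonoidAlgebra k K')
        (Representation.asModule (ρ.comp K'.subtype) ⧸ conj ρ (Quotient.out c) U) :=
    fun c => isSemisimpleModule_of_isSimpleModule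
  haveI : IsSemisimpleModule (MonoidAlgebra k K')
      ((c : K ⧸ (K' ⊔ MonoidHom.ker ρ)) →
        Representation.asModule (ρ.comp K'.subtype) ⧸ conj ρ (Quotient.out c) U) :=
    pi_isSemisimpleModule _
  have hsem : IsSemisimpleModule (MonoidAlgebra k K')
      (Representation.asModule (ρ.comp K'.subtype)) :=
    IsSemisimpleModule.congr (M := ↥(LinearMap.range f))
      (LinearEquiv.ofInjective f (LinearMap.ker_eq_bot.mp hker))
  exact hsem
end

section
/- Let k be an algebraically closed field, K a group, and H a normal subgroup of K such that the quotient K/H is finite and commutative. Let (ρ, V) and (ρ̄, W) be finite-dimensional simple k-linear representations of K such that there exists a nonzero k-linear map V → W that is equivariant for the restricted actions of H. Then there exists a group homomorphism χ : K → k^× trivial on H such that ρ ≅ ρ̄ ⊗ χ, where ρ̄ ⊗ χ denotes the representation g ↦ χ(g)·ρ̄(g) on W. -/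
/-!
STATEMENT 4: Let `k` be an algebraically closed field, `K` a group, and `H` a normal subgroup
of `K` with `K/H` finite and commutative.  Let `(ρ, V)` and `(ρ', W)` be finite-dimensional
simple `k`-linear representations of `K` such that there is a nonzero `k`-linear map `V → W`
equivariant for the restricted actions of `H`.  Then there is a character `χ : K → kˣ`
trivial on `H` with `ρ ≅ ρ' ⊗ χ` (the twist of `ρ'` by `χ`).
-/


lemma exists_common_eigenvector_aux {k : Type} [Field k] [IsAlgClosed k]
    {M : Type} [AddCommGroup M] [Module k M] [FiniteDimensional k M] [Nontrivial M]
    {G : Type} (T : G → Module.End k M)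
    (hcomm : ∀ a b : G, ∀ x : M, T a (T b x) = T b (T a x)) :
    ∃ m : M, m ≠ 0 ∧ ∀ g, ∃ c : k, T g m = c • m := by
  classical
  set S : Set ℕ := {n | ∃ p : Submodule k M, p ≠ ⊥ ∧ (∀ g, ∀ x ∈ p, T g x ∈ p)
      ∧ Module.finrank k p = n} with hS
  have hne : S.Nonempty := ⟨Module.finrank k (⊤ : Submodule k M),
    ⊤, by simp, fun g x _ => Submodule.mem_top, rfl⟩
  obtain ⟨p, hpbot, hpinv, hpn⟩ := Nat.sInf_mem hne
  have hscal : ∀ g, ∃ c : k, ∀ x ∈ p, T g x = c • x := by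
    intro g
    haveI : Nontrivial p := Submodule.nontrivial_iff_ne_bot.mpr hpbot
    set Tg : Module.End k p := (T g).restrict (hpinv g) with hTg
    obtain ⟨c, hc⟩ := Module.End.exists_eigenvalue Tg
    refine ⟨c, ?_⟩
    set E : Submodule k M := p ⊓ LinearMap.ker (T g - c • LinearMap.id) with hE
    have hmemE : ∀ x, x ∈ E ↔ x ∈ p ∧ T g x = c • x := by
      intro x
      simp [hE, Submodule.mem_inf, LinearMap.mem_ker, sub_eq_zero]
    have hEbot : E ≠ ⊥ := by
      obtain ⟨v, hv⟩ := hc.exists_hasEigenvector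
      intro h
      have hvE : (v : M) ∈ E := by
        refine (hmemE _).mpr ⟨v.2, ?_⟩
        have := congrArg (Subtype.val) hv.apply_eq_smul
        simpa [hTg, LinearMap.restrict_apply] using this
      rw [h] at hvE
      exact hv.2 (Subtype.ext (by simpa using hvE))
    have hEinv : ∀ g', ∀ x ∈ E, T g' x ∈ E := by
      intro g' x hx
      obtain ⟨hx1, hx2⟩ := (hmemE x).mp hx
      refine (hmemE _).mpr ⟨hpinv g' x hx1, ?_⟩
      rw [hcomm g g', hx2, map_smul]
    have hle : E ≤ p := inf_le_left
    have h1 : sInf S ≤ Module.finrank k E := Nat.sInf_le ⟨E, hEbot, hEinv, rfl⟩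
    have h2 : Module.finrank k E ≤ Module.finrank k p := Submodule.finrank_mono hle
    have hEp : E = p := Submodule.eq_of_le_of_finrank_le hle (by omega)
    intro x hx
    exact ((hmemE x).mp (hEp ▸ hx)).2
  obtain ⟨m, hm, hm0⟩ := Submodule.exists_mem_ne_zero_of_ne_bot hpbot
  exact ⟨m, hm0, fun g => (hscal g).imp fun c hc => hc m hm⟩
lemma invariant_submodule_bot_or_top {k K V : Type} [Field k] [Group K]
    [AddCommGroup V] [Module k V]
    (ρ : Representation k K V) (hV : IsSimpleModule (MonoidAlgebra k K) ρ.asModule)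
    (p : Submodule k V) (hp : ∀ g : K, ∀ x ∈ p, ρ g x ∈ p) : p = ⊥ ∨ p = ⊤ := by
  classical
  have hsmul : ∀ (r : MonoidAlgebra k K), ∀ x ∈ p, ρ.asAlgebraHom r x ∈ p := by
    intro r
    induction r using MonoidAlgebra.induction_linear with
    | zero => intro x hx; simp only [map_zero, LinearMap.zero_apply]; exact p.zero_mem
    | add a b ha hb => intro x hx; rw [map_add]; exact p.add_mem (ha x hx) (hb x hx)
    | single g a =>
      intro x hx
      rw [Representation.asAlgebraHom_single]
      exact p.smul_mem a (hp g x hx)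
  let q : Submodule (MonoidAlgebra k K) ρ.asModule :=
    { carrier := (p : Set V)
      add_mem' := fun ha hb => p.add_mem ha hb
      zero_mem' := p.zero_mem
      smul_mem' := fun r x hx => by
        show ρ.asModuleEquiv (r • x) ∈ p
        rw [Representation.asModuleEquiv_map_smul]
        exact hsmul r _ hx }
  rcases hV.toIsSimpleOrder.2 q with h | h
  · left
    rw [Submodule.eq_bot_iff]
    intro x hx
    have : x ∈ q := hx
    rw [h] at this
    exact (Submodule.mem_bot (R := MonoidAlgebra k K) (M := ρ.asModule)).mp this
  · right
    rw [Submodule.eq_top_iff']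
    intro x
    have hx : ρ.asModuleEquiv.symm x ∈ q := h ▸ Submodule.mem_top
    exact hx

theorem twist_by_character_of_common_restriction
    (k : Type) [Field k] [IsAlgClosed k]
    (K : Type) [Group K] (H : Subgroup K) [H.Normal]
    [Finite (K ⧸ H)] (hcomm : ∀ a b : K ⧸ H, a * b = b * a)
    (V W : Type) [AddCommGroup V] [Module k V] [FiniteDimensional k V]
    [AddCommGroup W] [Module k W] [FiniteDimensional k W]
    (ρ : Representation k K V) (ρ' : Representation k K W)
    (hV : IsSimpleModule (MonoidAlgebra k K) ρ.asModule)
    (hW : IsSimpleModule (MonoidAlgebra k K) ρ'.asModule)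
    (hf : ∃ f : V →ₗ[k] W, f ≠ 0 ∧ ∀ h ∈ H, ∀ v : V, f (ρ h v) = ρ' h (f v)) :
    ∃ χ : K →* kˣ, (∀ h ∈ H, χ h = 1) ∧
      ∃ e : V ≃ₗ[k] W, ∀ (g : K) (v : V), e (ρ g v) = (χ g : k) • ρ' g (e v) := by
  classical
  obtain ⟨f₀, hf₀ne, hf₀⟩ := hf
  -- the subspace of `H`-equivariant maps
  set M : Submodule k (V →ₗ[k] W) :=
    { carrier := {f | ∀ h ∈ H, ∀ v : V, f (ρ h v) = ρ' h (f v)}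
      add_mem' := by intro a b ha hb h hh v; simp [ha h hh v, hb h hh v]
      zero_mem' := by intro h hh v; simp
      smul_mem' := by intro t f hf h hh v; simp [hf h hh v] } with hM
  have hmemM : ∀ f : V →ₗ[k] W, f ∈ M ↔ ∀ h ∈ H, ∀ v : V, f (ρ h v) = ρ' h (f v) :=
    fun f => Iff.rfl
  -- conjugation action on maps
  set S : K → Module.End k (V →ₗ[k] W) := fun g =>
    { toFun := fun f => (ρ' g) ∘ₗ f ∘ₗ (ρ g⁻¹)
      map_add' := by intro a b; ext v; simp
      map_smul' := by intro t a; ext v; simp } with hSdef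
  have hS_apply : ∀ g f v, S g f v = ρ' g (f (ρ g⁻¹ v)) := fun _ _ _ => rfl
  have hρ2 : ∀ (a b : K) (v : V), ρ a (ρ b v) = ρ (a * b) v := by
    intro a b v; rw [map_mul]; rfl
  have hρ'2 : ∀ (a b : K) (w : W), ρ' a (ρ' b w) = ρ' (a * b) w := by
    intro a b w; rw [map_mul]; rfl
  have hSmul : ∀ a b f, S a (S b f) = S (a * b) f := by
    intro a b f; ext v
    rw [hS_apply, hS_apply, hS_apply, hρ'2, mul_inv_rev, ← hρ2]
  have hSM : ∀ g, ∀ f ∈ M, S g f ∈ M := by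
    intro g f hfM
    rw [hmemM] at hfM ⊢
    intro h hh v
    rw [hS_apply, hS_apply]
    have h1 : g⁻¹ * h * g ∈ H := by
      have := Subgroup.Normal.conj_mem ‹H.Normal› h hh g⁻¹
      simpa using this
    have e1 : ρ g⁻¹ (ρ h v) = ρ (g⁻¹ * h * g) (ρ g⁻¹ v) := by
      rw [hρ2, hρ2]; congr 1; group
    rw [e1, hfM _ h1, hρ'2, hρ'2]
    congr 2
    group
  have hSH : ∀ h ∈ H, ∀ f ∈ M, S h f = f := by
    intro h hh f hfM
    ext v
    rw [hS_apply, ← (hmemM f).mp hfM h hh (ρ h⁻¹ v), hρ2]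
    simp
  -- restricted operators on M
  set T : K → Module.End k ↥M := fun g => (S g).restrict (fun f hf => hSM g f hf) with hT
  have hTcomm : ∀ a b : K, ∀ x : ↥M, T a (T b x) = T b (T a x) := by
    intro a b x
    apply Subtype.ext
    show S a (S b (x : V →ₗ[k] W)) = S b (S a (x : V →ₗ[k] W))
    rw [hSmul, hSmul]
    have hH : (b * a)⁻¹ * (a * b) ∈ H := by
      have hq : (QuotientGroup.mk (b * a) : K ⧸ H) = QuotientGroup.mk (a * b) := by
        rw [show ((b * a : K) : K ⧸ H) = ((b : K ⧸ H) * a) from rfl,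
          show ((a * b : K) : K ⧸ H) = ((a : K ⧸ H) * b) from rfl]
        exact hcomm _ _
      exact QuotientGroup.eq.mp hq
    have : a * b = (b * a) * ((b * a)⁻¹ * (a * b)) := by group
    rw [this, ← hSmul, hSH _ hH _ x.2]
  haveI : Nontrivial ↥M := by
    refine ⟨⟨⟨f₀, (hmemM f₀).mpr hf₀⟩, 0, ?_⟩⟩
    intro hcontra
    exact hf₀ne (by simpa using congrArg Subtype.val hcontra)
  obtain ⟨m, hm0, hmeig⟩ := exists_common_eigenvector_aux T hTcomm
  set f : V →ₗ[k] W := (m : V →ₗ[k] W) with hfdef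
  have hfne : f ≠ 0 := by
    intro hcontra
    exact hm0 (Subtype.ext hcontra)
  choose c hc using hmeig
  have hSg : ∀ g, S g f = c g • f := by
    intro g
    have := congrArg Subtype.val (hc g)
    simpa [hT, LinearMap.restrict_apply] using this
  have huniq : ∀ a b : k, a • f = b • f → a = b := by
    intro a b hab
    by_contra hne
    have : (a - b) • f = 0 := by rw [sub_smul, hab, sub_self]
    rcases smul_eq_zero.mp this with h | h
    · exact hne (sub_eq_zero.mp h)
    · exact hfne h
  have hc1 : c 1 = 1 := by
    refine huniq _ _ ?_
    rw [← hSg 1, one_smul]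
    ext v
    rw [hS_apply]
    simp
  have hcmul : ∀ a b : K, c (a * b) = c a * c b := by
    intro a b
    refine huniq _ _ ?_
    rw [← hSg (a * b), ← hSmul, hSg b, map_smul, hSg a, smul_smul, mul_comm]
  have hcH : ∀ h ∈ H, c h = 1 := by
    intro h hh
    refine huniq _ _ ?_
    rw [← hSg h, one_smul, hSH h hh f m.2]
  have hcne : ∀ g, c g ≠ 0 := by
    intro g
    have : c g * c g⁻¹ = 1 := by rw [← hcmul, mul_inv_cancel, hc1]
    exact left_ne_zero_of_mul_eq_one this
  set u : K →* kˣ := MonoidHom.mk' (fun g => Units.mk0 (c g) (hcne g))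
    (fun a b => by ext; simp [hcmul]) with hu
  have hfequiv : ∀ g v, f (ρ g v) = (c g)⁻¹ • ρ' g (f v) := by
    intro g v
    have h1 := DFunLike.congr_fun (hSg g) (ρ g v)
    rw [hS_apply, hρ2] at h1
    simp only [LinearMap.smul_apply] at h1
    rw [eq_comm, inv_smul_eq_iff₀ (hcne g), ← h1]
    simp
  have hker : LinearMap.ker f = ⊥ := by
    have hinv : ∀ g : K, ∀ x ∈ LinearMap.ker f, ρ g x ∈ LinearMap.ker f := by
      intro g x hx
      rw [LinearMap.mem_ker] at hx ⊢
      rw [hfequiv, hx, map_zero, smul_zero]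
    rcases invariant_submodule_bot_or_top ρ hV (LinearMap.ker f) hinv with h | h
    · exact h
    · exact absurd (LinearMap.ker_eq_top.mp h) hfne
  have hrange : LinearMap.range f = ⊤ := by
    have hinv : ∀ g : K, ∀ y ∈ LinearMap.range f, ρ' g y ∈ LinearMap.range f := by
      rintro g y ⟨x, rfl⟩
      have : ρ' g (f x) = c g • f (ρ g x) := by
        rw [hfequiv, smul_smul, mul_inv_cancel₀ (hcne g), one_smul]
      rw [this]
      exact Submodule.smul_mem _ _ ⟨ρ g x, rfl⟩
    rcases invariant_submodule_bot_or_top ρ' hW (LinearMap.range f) hinv with h | h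
    · exact absurd (LinearMap.range_eq_bot.mp h) hfne
    · exact h
  set e : V ≃ₗ[k] W := LinearEquiv.ofBijective f
    ⟨LinearMap.ker_eq_bot.mp hker, LinearMap.range_eq_top.mp hrange⟩ with he
  refine ⟨u⁻¹, ?_, e, ?_⟩
  · intro h hh
    rw [MonoidHom.inv_apply, inv_eq_one]
    ext
    simp [hu, hcH h hh]
  · intro g v
    have hcoe : ((u⁻¹ g : kˣ) : k) = (c g)⁻¹ := by
      rw [MonoidHom.inv_apply]
      simp [hu]
    rw [hcoe]
    show f (ρ g v) = (c g)⁻¹ • ρ' g (f v)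
    exact hfequiv g v
end

section
/- Let k be an algebraically closed field, G a group, and N a normal subgroup of G such that G/N is commutative. Let (ρ_1, V_1) and (ρ_2, V_2) be simple k-linear representations of G (simple as k[G]-modules) such that the k-vector space Hom_{k[N]}(V_1, V_2) of N-equivariant k-linear maps is nonzero and finite-dimensional over k. Then there exists a group homomorphism χ : G → k^× trivial on N such that ρ_1 ≅ ρ_2 ⊗ χ, where ρ_2 ⊗ χ denotes the representation g ↦ χ(g)·ρ_2(g) on V_2. -/
/-!
STATEMENT 5: Let `k` be an algebraically closed field, `G` a group and `N` a normal subgroup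
with `G/N` commutative.  Let `(ρ₁, V₁)`, `(ρ₂, V₂)` be simple `k`-linear representations of
`G` such that the space `Hom_{k[N]}(V₁, V₂)` of `N`-equivariant `k`-linear maps is nonzero
and finite-dimensional over `k`.  Then there is a character `χ : G → kˣ` trivial on `N` with
`ρ₁ ≅ ρ₂ ⊗ χ`.
-/

/-- The `k`-subspace of `V₁ →ₗ[k] V₂` consisting of maps equivariant for the restrictions of
`ρ₁`, `ρ₂` to a subgroup `N`; this is the space `Hom_{k[N]}(V₁, V₂)`. -/
def equivariantHom {k G V₁ V₂ : Type} [Field k] [Group G]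
    [AddCommGroup V₁] [Module k V₁] [AddCommGroup V₂] [Module k V₂]
    (N : Subgroup G) (ρ₁ : Representation k G V₁) (ρ₂ : Representation k G V₂) :
    Submodule k (V₁ →ₗ[k] V₂) where
  carrier := {f | ∀ g ∈ N, ∀ v : V₁, f (ρ₁ g v) = ρ₂ g (f v)}
  add_mem' := by
    intro f f' hf hf' g hg v
    simp [hf g hg v, hf' g hg v]
  zero_mem' := by
    intro g hg v
    simp
  smul_mem' := by
    intro c f hf g hg v
    simp [hf g hg v]

lemma invariant_eq_bot_or_top' {k G V : Type} [Field k] [Group G] [AddCommGroup V] [Module k V]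
    (ρ : Representation k G V) (h : IsSimpleModule (MonoidAlgebra k G) ρ.asModule)
    (p : Submodule k V) (hp : ∀ g : G, ∀ v ∈ p, ρ g v ∈ p) : p = ⊥ ∨ p = ⊤ := by
  let q : Submodule (MonoidAlgebra k G) ρ.asModule :=
    { carrier := (p : Set V)
      add_mem' := fun ha hb => p.add_mem ha hb
      zero_mem' := p.zero_mem
      smul_mem' := by
        intro r x hx
        show ρ.asAlgebraHom r x ∈ p
        induction r using MonoidAlgebra.induction_on with
        | of g => simpa [Representation.asAlgebraHom_of] using hp g x hx
        | add f g hf hg => rw [map_add]; exact p.add_mem hf hg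
        | smul c f hf => rw [map_smul]; exact p.smul_mem c hf }
  rcases eq_bot_or_eq_top q with hq | hq
  · left
    rw [eq_bot_iff]
    intro x hx
    have : x ∈ q := hx
    rw [hq] at this
    exact (Submodule.mem_bot k).mpr ((Submodule.mem_bot (R := MonoidAlgebra k G) (M := ρ.asModule)).mp this)
  · right
    rw [eq_top_iff]
    intro x _
    have : x ∈ (⊤ : Submodule (MonoidAlgebra k G) ρ.asModule) := trivial
    rw [← hq] at this
    exact this

lemma exists_common_eigenvector' {k W : Type} [Field k] [IsAlgClosed k] [AddCommGroup W]
    [Module k W] [FiniteDimensional k W] [Nontrivial W] {ι : Type}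
    (T : ι → Module.End k W) (hcomm : ∀ i j, T i ∘ₗ T j = T j ∘ₗ T i) :
    ∃ w : W, w ≠ 0 ∧ ∀ i, ∃ μ : k, T i w = μ • w := by
  classical
  set P : Submodule k W → Prop :=
    fun p => p ≠ ⊥ ∧ ∀ i : ι, ∀ x ∈ p, T i x ∈ p with hP
  set s : Set ℕ := {m | ∃ p : Submodule k W, P p ∧ Module.finrank k p = m} with hs
  have hsne : s.Nonempty := ⟨Module.finrank k (⊤ : Submodule k W),
    ⟨⊤, ⟨top_ne_bot, fun i x _ => trivial⟩, rfl⟩⟩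
  obtain ⟨p, hp, hpr⟩ := Nat.sInf_mem hsne
  have hmin : ∀ q : Submodule k W, P q → Module.finrank k p ≤ Module.finrank k q := by
    intro q hq
    rw [hpr]
    exact Nat.sInf_le ⟨q, hq, rfl⟩
  have hscalar : ∀ i : ι, ∃ μ : k, ∀ x ∈ p, T i x = μ • x := by
    intro i
    haveI : Nontrivial p := Submodule.nontrivial_iff_ne_bot.mpr hp.1
    obtain ⟨μ, hμ⟩ := Module.End.exists_eigenvalue ((T i).restrict (hp.2 i))
    obtain ⟨v, hv⟩ := hμ.exists_hasEigenvector
    refine ⟨μ, ?_⟩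
    set K : Submodule k W :=
      { carrier := {x | x ∈ p ∧ T i x = μ • x}
        add_mem' := by
          rintro a b ⟨ha, ha'⟩ ⟨hb, hb'⟩
          exact ⟨p.add_mem ha hb, by simp [map_add, ha', hb', smul_add]⟩
        zero_mem' := ⟨p.zero_mem, by simp⟩
        smul_mem' := by
          rintro c a ⟨ha, ha'⟩
          refine ⟨p.smul_mem c ha, ?_⟩
          rw [map_smul, ha', smul_comm] } with hK
    have hKP : P K := by
      constructor
      · intro hKbot
        have hvK : (v : W) ∈ K := by
          refine ⟨v.2, ?_⟩
          have := hv.1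
          rw [Module.End.mem_eigenspace_iff] at this
          have := congrArg (Subtype.val) this
          simpa [LinearMap.restrict_coe_apply] using this
        rw [hKbot] at hvK
        exact hv.2 (by simpa [Submodule.coe_eq_zero] using (Submodule.mem_bot k).mp hvK)
      · intro j x hx
        refine ⟨hp.2 j x hx.1, ?_⟩
        have := congrFun (congrArg (fun f : Module.End k W => (f : W → W)) (hcomm i j)) x
        simp only [LinearMap.coe_comp, Function.comp_apply] at this
        rw [this, hx.2, map_smul]
    have hKle : K ≤ p := fun x hx => hx.1
    have : K = p := Submodule.eq_of_le_of_finrank_le hKle (hmin K hKP)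
    intro x hx
    rw [← this] at hx
    exact hx.2
  obtain ⟨w, hw, hw0⟩ := Submodule.exists_mem_ne_zero_of_ne_bot hp.1
  exact ⟨w, hw0, fun i => (hscalar i).imp fun μ hμ => hμ w hw⟩


theorem twist_by_character_of_nonzero_finite_dimensional_equivariant_hom
    (k : Type) [Field k] [IsAlgClosed k]
    (G : Type) [Group G] (N : Subgroup G) [N.Normal]
    (hcomm : ∀ a b : G ⧸ N, a * b = b * a)
    (V₁ V₂ : Type) [AddCommGroup V₁] [Module k V₁] [AddCommGroup V₂] [Module k V₂]
    (ρ₁ : Representation k G V₁) (ρ₂ : Representation k G V₂)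
    (h₁ : IsSimpleModule (MonoidAlgebra k G) ρ₁.asModule)
    (h₂ : IsSimpleModule (MonoidAlgebra k G) ρ₂.asModule)
    (hne : equivariantHom N ρ₁ ρ₂ ≠ ⊥)
    (hfd : FiniteDimensional k (equivariantHom N ρ₁ ρ₂)) :
    ∃ χ : G →* kˣ, (∀ n ∈ N, χ n = 1) ∧
      ∃ e : V₁ ≃ₗ[k] V₂, ∀ (g : G) (v : V₁), e (ρ₁ g v) = (χ g : k) • ρ₂ g (e v) := by
  classical
  haveI hNn : N.Normal := inferInstance
  have mem_iff : ∀ f : V₁ →ₗ[k] V₂, f ∈ equivariantHom N ρ₁ ρ₂ ↔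
      ∀ g ∈ N, ∀ v : V₁, f (ρ₁ g v) = ρ₂ g (f v) := fun f => Iff.rfl
  haveI : Nontrivial (equivariantHom N ρ₁ ρ₂) := Submodule.nontrivial_iff_ne_bot.mpr hne
  -- the twisted conjugation action of `G` on `Hom_{k[N]}(V₁, V₂)`
  have hmem : ∀ (g : G) (f : V₁ →ₗ[k] V₂), f ∈ equivariantHom N ρ₁ ρ₂ →
      (ρ₂ g⁻¹ ∘ₗ f ∘ₗ ρ₁ g) ∈ equivariantHom N ρ₁ ρ₂ := by
    intro g f hf n hn v
    simp only [LinearMap.comp_apply]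
    have e1 : ρ₁ g (ρ₁ n v) = ρ₁ (g * n * g⁻¹) (ρ₁ g v) := by
      rw [← Module.End.mul_apply, ← Module.End.mul_apply, ← map_mul, ← map_mul]
      congr 1
      group
    have e2 : f (ρ₁ (g * n * g⁻¹) (ρ₁ g v)) = ρ₂ (g * n * g⁻¹) (f (ρ₁ g v)) :=
      (mem_iff f).mp hf _ (hNn.conj_mem n hn g) _
    rw [e1, e2, ← Module.End.mul_apply, ← map_mul, ← Module.End.mul_apply (ρ₂ n),
      ← map_mul]
    congr 1
    group
  let T : G → Module.End k (equivariantHom N ρ₁ ρ₂) := fun g =>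
    { toFun := fun f => ⟨ρ₂ g⁻¹ ∘ₗ (f : V₁ →ₗ[k] V₂) ∘ₗ ρ₁ g, hmem g f f.2⟩
      map_add' := by
        intro f₁ f₂
        apply Subtype.ext
        ext v
        simp
      map_smul' := by
        intro c f
        apply Subtype.ext
        ext v
        simp }
  have Tapp : ∀ (g : G) (f : equivariantHom N ρ₁ ρ₂) (v : V₁),
      ((T g f : V₁ →ₗ[k] V₂)) v = ρ₂ g⁻¹ ((f : V₁ →ₗ[k] V₂) (ρ₁ g v)) := fun g f v => rfl
  -- T is trivial on left multiplication by N
  have htriv : ∀ d ∈ N, ∀ x : G, T (d * x) = T x := by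
    intro d hd x
    ext f v
    rw [Tapp, Tapp]
    have e1 : ρ₁ (d * x) v = ρ₁ d (ρ₁ x v) := by
      rw [map_mul, Module.End.mul_apply]
    have e2 : (f : V₁ →ₗ[k] V₂) (ρ₁ d (ρ₁ x v)) = ρ₂ d ((f : V₁ →ₗ[k] V₂) (ρ₁ x v)) :=
      (mem_iff _).mp f.2 d hd _
    rw [e1, e2, ← Module.End.mul_apply, ← map_mul]
    congr 1
    group
  have hcompose : ∀ g h : G, T g ∘ₗ T h = T (h * g) := by
    intro g h
    ext f v
    simp only [LinearMap.comp_apply]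
    rw [Tapp, Tapp, Tapp]
    rw [map_mul, Module.End.mul_apply, mul_inv_rev, map_mul, Module.End.mul_apply]
  have hcommT : ∀ g h : G, T (h * g) = T (g * h) := by
    intro g h
    have hc : (g * h)⁻¹ * (h * g) ∈ N := by
      have hq := hcomm ((g : G ⧸ N)) ((h : G ⧸ N))
      rw [← QuotientGroup.mk_mul, ← QuotientGroup.mk_mul] at hq
      exact (QuotientGroup.eq).mp hq
    have hd' : (h * g) * (g * h)⁻¹ ∈ N := by
      have := hNn.conj_mem _ hc (g * h)
      have heq : (g * h) * ((g * h)⁻¹ * (h * g)) * (g * h)⁻¹ = (h * g) * (g * h)⁻¹ := by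
        group
      rwa [heq] at this
    have heq2 : h * g = ((h * g) * (g * h)⁻¹) * (g * h) := by group
    rw [heq2, htriv _ hd' _]
  have hcommT' : ∀ g h : G, T g ∘ₗ T h = T h ∘ₗ T g := by
    intro g h
    rw [hcompose, hcompose, hcommT]
  haveI : FiniteDimensional k (equivariantHom N ρ₁ ρ₂) := hfd
  obtain ⟨f₀, hf₀ne, hEig⟩ := exists_common_eigenvector' T hcommT'
  set χ₀ : G → k := fun g => (hEig g).choose with hχ₀def
  have hχ : ∀ g : G, T g f₀ = χ₀ g • f₀ := fun g => (hEig g).choose_spec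
  have hcan : ∀ a b : k, a • f₀ = b • f₀ → a = b := fun a b hab =>
    smul_left_injective k hf₀ne hab
  have hT1 : T 1 = LinearMap.id := by
    ext f v
    rw [Tapp]
    simp
  have hχ1 : χ₀ 1 = 1 := by
    apply hcan
    rw [← hχ 1, hT1, one_smul]
    rfl
  have hχmul : ∀ g h : G, χ₀ (g * h) = χ₀ g * χ₀ h := by
    intro g h
    apply hcan
    have : T (g * h) f₀ = (T h ∘ₗ T g) f₀ := by rw [hcompose]
    rw [← hχ (g * h), this]
    simp only [LinearMap.comp_apply]
    rw [hχ g, map_smul, hχ h, smul_smul, mul_comm]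
  have hχN : ∀ n ∈ N, χ₀ n = 1 := by
    intro n hn
    apply hcan
    have : T n = T 1 := by
      have := htriv n hn 1
      rwa [mul_one] at this
    rw [← hχ n, this, hT1, one_smul]
    rfl
  have hunit : ∀ g : G, χ₀ g * χ₀ g⁻¹ = 1 := by
    intro g
    rw [← hχmul, mul_inv_cancel, hχ1]
  have hunit' : ∀ g : G, χ₀ g⁻¹ * χ₀ g = 1 := by
    intro g
    rw [← hχmul, inv_mul_cancel, hχ1]
  set χ : G →* kˣ :=
    { toFun := fun g => ⟨χ₀ g, χ₀ g⁻¹, hunit g, hunit' g⟩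
      map_one' := Units.ext (by simpa using hχ1)
      map_mul' := fun a b => Units.ext (by simpa using hχmul a b) } with hχdef
  set φ : V₁ →ₗ[k] V₂ := (f₀ : V₁ →ₗ[k] V₂) with hφdef
  have hφne : φ ≠ 0 := by
    intro h
    exact hf₀ne (Subtype.ext h)
  have hcancel₂ : ∀ (g : G) (x : V₂), ρ₂ g (ρ₂ g⁻¹ x) = x := by
    intro g x
    rw [← Module.End.mul_apply, ← map_mul, mul_inv_cancel, map_one, Module.End.one_apply]
  have hkey : ∀ (g : G) (v : V₁), φ (ρ₁ g v) = χ₀ g • ρ₂ g (φ v) := by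
    intro g v
    have h0 := congrArg (fun f : equivariantHom N ρ₁ ρ₂ => (f : V₁ →ₗ[k] V₂) v) (hχ g)
    simp only [Tapp] at h0
    have h0' : ρ₂ g⁻¹ (φ (ρ₁ g v)) = χ₀ g • φ v := h0
    have h1 := congrArg (ρ₂ g) h0'
    rw [hcancel₂, map_smul] at h1
    exact h1
  have hinv₁ : ∀ g : G, ∀ v ∈ LinearMap.ker φ, ρ₁ g v ∈ LinearMap.ker φ := by
    intro g v hv
    rw [LinearMap.mem_ker] at hv ⊢
    rw [hkey, hv, map_zero, smul_zero]
  have hker : LinearMap.ker φ = ⊥ := by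
    rcases invariant_eq_bot_or_top' ρ₁ h₁ (LinearMap.ker φ) hinv₁ with h | h
    · exact h
    · exact absurd (LinearMap.ker_eq_top.mp h) hφne
  have hinv₂ : ∀ g : G, ∀ x ∈ LinearMap.range φ, ρ₂ g x ∈ LinearMap.range φ := by
    rintro g x ⟨v, rfl⟩
    have hne0 : χ₀ g ≠ 0 := left_ne_zero_of_mul_eq_one (hunit g)
    have : ρ₂ g (φ v) = (χ₀ g)⁻¹ • φ (ρ₁ g v) := by
      rw [hkey, inv_smul_smul₀ hne0]
    rw [this]
    exact Submodule.smul_mem _ _ (LinearMap.mem_range_self φ _)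
  have hrange : LinearMap.range φ = ⊤ := by
    rcases invariant_eq_bot_or_top' ρ₂ h₂ (LinearMap.range φ) hinv₂ with h | h
    · exact absurd (LinearMap.range_eq_bot.mp h) hφne
    · exact h
  refine ⟨χ, fun n hn => Units.ext (hχN n hn), ?_⟩
  refine ⟨LinearEquiv.ofBijective φ ⟨LinearMap.ker_eq_bot.mp hker,
    LinearMap.range_eq_top.mp hrange⟩, ?_⟩
  intro g v
  exact hkey g v
end

section
/- Let k be a field, G a group, and H a subgroup of G. Let (κ, X) be a nonzero finite-dimensional k-linear representation of G such that every k-linear endomorphism of X commuting with the action of H is a scalar multiple of the identity. Let (σ, Y) and (σ', Y') be finite-dimensional k-linear representations of G on which H acts trivially (H ⊆ ker σ and H ⊆ ker σ'). If the tensor product representations κ ⊗ σ and κ ⊗ σ' of G are isomorphic, then σ ≅ σ' as representations of G. -/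
open TensorProduct

/-!
STATEMENT 6: Let `k` be a field, `G` a group, `H ≤ G`.  Let `(κ, X)` be a nonzero
finite-dimensional representation of `G` whose `H`-equivariant endomorphisms are all scalar,
and let `(σ, Y)`, `(σ', Y')` be finite-dimensional representations of `G` on which `H` acts
trivially.  If `κ ⊗ σ ≅ κ ⊗ σ'` as representations of `G`, then `σ ≅ σ'`.
-/

private lemma tmul_left_cancel' {k : Type} [Field k] {X V : Type}
    [AddCommGroup X] [Module k X] [AddCommGroup V] [Module k V]
    {x : X} (hx : x ≠ 0) {v w : V} (h : x ⊗ₜ[k] v = x ⊗ₜ[k] w) : v = w := by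
  obtain ⟨φ, hφ⟩ : ∃ φ : Module.Dual k X, φ x ≠ 0 := by
    by_contra hc
    push_neg at hc
    exact hx ((Module.forall_dual_apply_eq_zero_iff k x).mp fun φ => hc φ)
  have h2 := congrArg (fun t => (TensorProduct.lid k V) ((LinearMap.rTensor V φ) t)) h
  simp only [LinearMap.rTensor_tmul, TensorProduct.lid_tmul] at h2
  exact smul_right_injective V hφ h2

private lemma exists_factor' {k : Type} [Field k] {G : Type} [Group G] {H : Subgroup G}
    {X Y Y' : Type}
    [AddCommGroup X] [Module k X] [Nontrivial X]
    [AddCommGroup Y] [Module k Y]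
    [AddCommGroup Y'] [Module k Y'] [FiniteDimensional k Y']
    (κ : Representation k G X)
    (hEnd : ∀ φ : X →ₗ[k] X,
      (∀ h ∈ H, ∀ x : X, φ (κ h x) = κ h (φ x)) → ∃ c : k, φ = c • LinearMap.id)
    (L : X ⊗[k] Y →ₗ[k] X ⊗[k] Y')
    (hL : ∀ h ∈ H, ∀ t, L (LinearMap.rTensor Y (κ h) t)
        = LinearMap.rTensor Y' (κ h) (L t)) :
    ∃ F : Y →ₗ[k] Y', ∀ (x : X) (y : Y), L (x ⊗ₜ[k] y) = x ⊗ₜ[k] F y := by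
  classical
  obtain ⟨x₀, hx₀⟩ := exists_ne (0 : X)
  obtain ⟨μ, hμ⟩ : ∃ μ : Module.Dual k X, μ x₀ = 1 := by
    obtain ⟨φ, hφ⟩ : ∃ φ : Module.Dual k X, φ x₀ ≠ 0 := by
      by_contra hc
      push_neg at hc
      exact hx₀ ((Module.forall_dual_apply_eq_zero_iff k x₀).mp fun φ => hc φ)
    exact ⟨(φ x₀)⁻¹ • φ, by simp [inv_mul_cancel₀ hφ]⟩
  set b := Module.finBasis k Y' with hb
  set ι := Fin (Module.finrank k Y')
  -- coordinate projections
  set π : ι → (X ⊗[k] Y' →ₗ[k] X) :=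
    fun i => (TensorProduct.rid k X).toLinearMap ∘ₗ LinearMap.lTensor X (b.coord i) with hπ
  have π_tmul : ∀ (i : ι) (x : X) (y' : Y'), π i (x ⊗ₜ[k] y') = b.coord i y' • x := by
    intro i x y'
    simp [hπ]
  have recon : ∀ t : X ⊗[k] Y', (∑ i : ι, (π i t) ⊗ₜ[k] b i) = t := by
    intro t
    induction t using TensorProduct.induction_on with
    | zero => simp
    | tmul x y' =>
        have : ∀ i : ι, (π i (x ⊗ₜ[k] y')) ⊗ₜ[k] b i = x ⊗ₜ[k] (b.repr y' i • b i) := by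
          intro i
          rw [π_tmul]
          rw [TensorProduct.smul_tmul]
          rfl
        rw [Finset.sum_congr rfl (fun i _ => this i), ← TensorProduct.tmul_sum,
          b.sum_repr y']
    | add t₁ t₂ h₁ h₂ =>
        simp only [map_add, TensorProduct.add_tmul, Finset.sum_add_distrib, h₁, h₂]
  have πκ : ∀ (i : ι), ∀ h ∈ H, ∀ t : X ⊗[k] Y',
      π i (LinearMap.rTensor Y' (κ h) t) = κ h (π i t) := by
    intro i h hh t
    induction t using TensorProduct.induction_on with
    | zero => simp
    | tmul x y' => rw [LinearMap.rTensor_tmul, π_tmul, π_tmul, map_smul]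
    | add t₁ t₂ h₁ h₂ => simp only [map_add, h₁, h₂]
  -- the scalar maps
  have key : ∀ (i : ι) (y : Y), ∃ c : k, ∀ x : X, π i (L (x ⊗ₜ[k] y)) = c • x := by
    intro i y
    have heq : ∀ h ∈ H, ∀ x : X,
        ((π i) ∘ₗ L ∘ₗ ((TensorProduct.mk k X Y).flip y)) (κ h x)
          = κ h (((π i) ∘ₗ L ∘ₗ ((TensorProduct.mk k X Y).flip y)) x) := by
      intro h hh x
      have h1 : (κ h x) ⊗ₜ[k] y = LinearMap.rTensor Y (κ h) (x ⊗ₜ[k] y) := by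
        rw [LinearMap.rTensor_tmul]
      simp only [LinearMap.comp_apply, LinearMap.flip_apply, TensorProduct.mk_apply]
      rw [h1, hL h hh, πκ i h hh]
    obtain ⟨c, hc⟩ := hEnd _ heq
    refine ⟨c, fun x => ?_⟩
    have := congrFun (congrArg (fun (f : X →ₗ[k] X) => (f : X → X)) hc) x
    simpa using this
  choose c hc using key
  refine ⟨∑ i : ι, (LinearMap.toSpanSingleton k Y' (b i)) ∘ₗ μ ∘ₗ (π i) ∘ₗ L ∘ₗ
      ((TensorProduct.mk k X Y) x₀), ?_⟩
  intro x y
  have hF : (∑ i : ι, (LinearMap.toSpanSingleton k Y' (b i)) ∘ₗ μ ∘ₗ (π i) ∘ₗ L ∘ₗ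
      ((TensorProduct.mk k X Y) x₀)) y = ∑ i : ι, c i y • b i := by
    rw [LinearMap.sum_apply]
    refine Finset.sum_congr rfl fun i _ => ?_
    simp only [LinearMap.comp_apply, TensorProduct.mk_apply, hc i y x₀,
      LinearMap.toSpanSingleton_apply, map_smul, hμ]
    simp
  rw [hF]
  calc L (x ⊗ₜ[k] y) = ∑ i : ι, (π i (L (x ⊗ₜ[k] y))) ⊗ₜ[k] b i := (recon _).symm
    _ = ∑ i : ι, x ⊗ₜ[k] (c i y • b i) := by
        refine Finset.sum_congr rfl fun i _ => ?_
        rw [hc i y x, TensorProduct.smul_tmul]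
    _ = x ⊗ₜ[k] ∑ i : ι, c i y • b i := (TensorProduct.tmul_sum _ _ _).symm

theorem tensor_cancellation_of_scalar_endomorphisms
    (k : Type) [Field k] (G : Type) [Group G] (H : Subgroup G)
    (X Y Y' : Type)
    [AddCommGroup X] [Module k X] [FiniteDimensional k X] [Nontrivial X]
    [AddCommGroup Y] [Module k Y] [FiniteDimensional k Y]
    [AddCommGroup Y'] [Module k Y'] [FiniteDimensional k Y']
    (κ : Representation k G X) (σ : Representation k G Y) (σ' : Representation k G Y')
    (hEnd : ∀ φ : X →ₗ[k] X,
      (∀ h ∈ H, ∀ x : X, φ (κ h x) = κ h (φ x)) → ∃ c : k, φ = c • LinearMap.id)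
    (hσ : ∀ h ∈ H, ∀ y : Y, σ h y = y)
    (hσ' : ∀ h ∈ H, ∀ y : Y', σ' h y = y)
    (hiso : ∃ e : (X ⊗[k] Y) ≃ₗ[k] (X ⊗[k] Y'),
      ∀ (g : G) (t : X ⊗[k] Y), e ((κ.tprod σ) g t) = (κ.tprod σ') g (e t)) :
    ∃ e : Y ≃ₗ[k] Y', ∀ (g : G) (y : Y), e (σ g y) = σ' g (e y) := by
  classical
  obtain ⟨e, he⟩ := hiso
  -- tprod on H is rTensor
  have tpσ : ∀ h ∈ H, ∀ t : X ⊗[k] Y, (κ.tprod σ) h t = LinearMap.rTensor Y (κ h) t := by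
    intro h hh t
    induction t using TensorProduct.induction_on with
    | zero => simp
    | tmul x y => simp [Representation.tprod_apply, hσ h hh y]
    | add t₁ t₂ h₁ h₂ => simp only [map_add, h₁, h₂]
  have tpσ' : ∀ h ∈ H, ∀ t : X ⊗[k] Y', (κ.tprod σ') h t = LinearMap.rTensor Y' (κ h) t := by
    intro h hh t
    induction t using TensorProduct.induction_on with
    | zero => simp
    | tmul x y => simp [Representation.tprod_apply, hσ' h hh y]
    | add t₁ t₂ h₁ h₂ => simp only [map_add, h₁, h₂]
  have he' : ∀ (g : G) (t : X ⊗[k] Y'), e.symm ((κ.tprod σ') g t) = (κ.tprod σ) g (e.symm t) := by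
    intro g t
    apply e.injective
    rw [e.apply_symm_apply, he, e.apply_symm_apply]
  obtain ⟨F, hF⟩ := exists_factor' (H := H) κ hEnd e.toLinearMap (by
    intro h hh t
    have := he h t
    simp only [LinearEquiv.coe_coe]
    rw [← tpσ h hh, ← tpσ' h hh]
    exact this)
  obtain ⟨F', hF'⟩ := exists_factor' (H := H) κ hEnd e.symm.toLinearMap (by
    intro h hh t
    have := he' h t
    simp only [LinearEquiv.coe_coe]
    rw [← tpσ' h hh, ← tpσ h hh]
    exact this)
  simp only [LinearEquiv.coe_coe] at hF hF'
  obtain ⟨x₀, hx₀⟩ := exists_ne (0 : X)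
  have hFF' : ∀ y : Y, F' (F y) = y := by
    intro y
    have : x₀ ⊗ₜ[k] F' (F y) = x₀ ⊗ₜ[k] y := by
      rw [← hF', ← hF, e.symm_apply_apply]
    exact tmul_left_cancel' hx₀ this
  have hF'F : ∀ y' : Y', F (F' y') = y' := by
    intro y'
    have : x₀ ⊗ₜ[k] F (F' y') = x₀ ⊗ₜ[k] y' := by
      rw [← hF, ← hF', e.apply_symm_apply]
    exact tmul_left_cancel' hx₀ this
  refine ⟨LinearEquiv.ofLinear F F' (LinearMap.ext hF'F) (LinearMap.ext hFF'), ?_⟩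
  intro g y
  simp only [LinearEquiv.ofLinear_apply]
  have hgx₀ : κ g x₀ ≠ 0 := by
    intro hc
    apply hx₀
    have : κ g⁻¹ (κ g x₀) = x₀ := by
      have h2 : κ g⁻¹ * κ g = 1 := by rw [← map_mul]; simp
      calc κ g⁻¹ (κ g x₀) = (κ g⁻¹ * κ g) x₀ := rfl
        _ = x₀ := by rw [h2]; rfl
    rw [hc, map_zero] at this
    exact this.symm
  apply tmul_left_cancel' (k := k) hgx₀
  calc (κ g x₀) ⊗ₜ[k] F (σ g y) = e ((κ g x₀) ⊗ₜ[k] (σ g y)) := (hF _ _).symm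
    _ = e ((κ.tprod σ) g (x₀ ⊗ₜ[k] y)) := by rw [Representation.tprod_apply]; rfl
    _ = (κ.tprod σ') g (e (x₀ ⊗ₜ[k] y)) := he g _
    _ = (κ.tprod σ') g (x₀ ⊗ₜ[k] F y) := by rw [hF]
    _ = (κ g x₀) ⊗ₜ[k] (σ' g (F y)) := by rw [Representation.tprod_apply]; rfl
end

section
/- Let k be a field, N a group, Z a central subgroup of N, N' a normal subgroup of N, and (τ, V) a simple k-linear representation of N such that Z acts on V by scalar operators and the subgroup Z·N'·ker(τ) has finite index in N, where ker(τ) = {g ∈ N : τ(g) = id_V}. Then V, viewed as a k[N']-module, is semisimple of finite length. -/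
/-!
STATEMENT 10: Let `k` be a field, `N` a group, `Z` a central subgroup of `N`, `N'` a normal
subgroup of `N`, and `(τ, V)` a simple `k`-linear representation of `N` such that `Z` acts on
`V` by scalar operators and the subgroup `Z · N' · ker τ` (which, `Z` being central and `N'`
normal, is the join `Z ⊔ N' ⊔ ker τ`) has finite index in `N`, where
`ker τ = {g : N | τ g = id_V}`.  Then `V`, viewed as a `k[N']-module, is semisimple of
finite length.
-/

namespace RestSemisimpleAux

variable {k : Type} [Field k] {N : Type} [Group N]
  {V : Type} [AddCommGroup V] [Module k V]
  (τ : Representation k N V) (N' : Subgroup N) [hN' : N'.Normal]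

lemma tau_tau (x y : N) (v : V) : τ x (τ y v) = τ (x * y) v := by
  rw [map_mul]; rfl

lemma smul_eq (a : MonoidAlgebra k N') (x : (Representation.asModule (τ.comp N'.subtype))) :
    a • x = Representation.asAlgebraHom (τ.comp N'.subtype) a x := rfl

lemma single_smul (n : N') (c : k) (x : (Representation.asModule (τ.comp N'.subtype))) :
    (MonoidAlgebra.single n c : MonoidAlgebra k N') • x = c • τ (n : N) (x : V) := by
  rw [smul_eq, Representation.asAlgebraHom_single]; rfl

lemma k_smul_mem (W : Submodule (MonoidAlgebra k N') (Representation.asModule (τ.comp N'.subtype)))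
    {c : k} {x : (Representation.asModule (τ.comp N'.subtype))} (hx : x ∈ W) : c • x ∈ W := by
  have h := W.smul_mem (MonoidAlgebra.single (1 : N') c) hx
  rwa [single_smul, OneMemClass.coe_one, map_one] at h

lemma coe_smul_mem (W : Submodule (MonoidAlgebra k N') (Representation.asModule (τ.comp N'.subtype)))
    (n : N) (hn : n ∈ N') {x : (Representation.asModule (τ.comp N'.subtype))} (hx : x ∈ W) :
    τ n (x : V) ∈ W := by
  have h := W.smul_mem (MonoidAlgebra.single (⟨n, hn⟩ : N') (1 : k)) hx
  rwa [single_smul, one_smul] at h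

/-- The image of a `k[N']`-submodule under `τ g`; it is again a `k[N']`-submodule since
`N'` is normal in `N`. -/
def conjSub (g : N) (W : Submodule (MonoidAlgebra k N') (Representation.asModule (τ.comp N'.subtype))) :
    Submodule (MonoidAlgebra k N') (Representation.asModule (τ.comp N'.subtype)) where
  carrier := {x : Representation.asModule (τ.comp N'.subtype) | ∃ w ∈ W, τ g (w : V) = (x : V)}
  zero_mem' := by
    show ∃ w ∈ W, τ g (w : V) = (0 : V)
    exact ⟨0, W.zero_mem, map_zero _⟩
  add_mem' := by
    intro x y hx hy
    obtain ⟨x', hx', hx''⟩ : ∃ w ∈ W, τ g (w : V) = (x : V) := hx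
    obtain ⟨y', hy', hy''⟩ : ∃ w ∈ W, τ g (w : V) = (y : V) := hy
    show ∃ w ∈ W, τ g (w : V) = (x + y : V)
    exact ⟨x' + y', W.add_mem hx' hy', (map_add (τ g) (x' : V) (y' : V)).trans (congrArg₂ (· + ·) hx'' hy'')⟩
  smul_mem' := by
    intro a x hx
    induction a using MonoidAlgebra.induction_linear with
    | zero =>
      rw [zero_smul]
      change ∃ w ∈ W, τ g (w : V) = _
      exact ⟨0, W.zero_mem, map_zero _⟩
    | add b c hb hc =>
      rw [add_smul]
      obtain ⟨y, hy, hy'⟩ : ∃ w ∈ W, τ g (w : V) = _ := hb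
      obtain ⟨z, hz, hz'⟩ : ∃ w ∈ W, τ g (w : V) = _ := hc
      change ∃ w ∈ W, τ g (w : V) = _
      exact ⟨y + z, W.add_mem hy hz, (map_add (τ g) (y : V) (z : V)).trans (congrArg₂ (· + ·) hy' hz')⟩
    | single n c =>
      obtain ⟨w, hw, hw'⟩ : ∃ w ∈ W, τ g (w : V) = _ := hx
      have hmem : g⁻¹ * (n : N) * g ∈ N' := by
        simpa using hN'.conj_mem (n : N) n.2 g⁻¹
      change ∃ w ∈ W, τ g (w : V) = _
      refine ⟨(MonoidAlgebra.single (⟨g⁻¹ * (n : N) * g, hmem⟩ : N') c) • w,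
        W.smul_mem _ hw, ?_⟩
      show τ g ((MonoidAlgebra.single (⟨g⁻¹ * (n : N) * g, hmem⟩ : N') c) • w)
          = (MonoidAlgebra.single n c : MonoidAlgebra k N') • x
      rw [single_smul, single_smul, ← hw', map_smul]
      congr 1
      rw [tau_tau τ g _ w, tau_tau τ (n : N) g w]
      congr 1
      group

lemma mem_conjSub {g : N} {W : Submodule (MonoidAlgebra k N') (Representation.asModule (τ.comp N'.subtype))}
    {x : (Representation.asModule (τ.comp N'.subtype))} :
    x ∈ conjSub τ N' g W ↔ ∃ w ∈ W, τ g (w : V) = (x : V) := Iff.rfl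

lemma conjSub_conjSub (g g' : N)
    (W : Submodule (MonoidAlgebra k N') (Representation.asModule (τ.comp N'.subtype))) :
    conjSub τ N' g (conjSub τ N' g' W) = conjSub τ N' (g * g') W := by
  ext x
  simp only [mem_conjSub]
  constructor
  · rintro ⟨_, ⟨w, hw, rfl⟩, rfl⟩
    exact ⟨w, hw, (tau_tau τ g g' w).symm ▸ rfl⟩
  · rintro ⟨w, hw, rfl⟩
    exact ⟨τ g' w, ⟨w, hw, rfl⟩, tau_tau τ g g' w⟩

lemma conjSub_one (W : Submodule (MonoidAlgebra k N') (Representation.asModule (τ.comp N'.subtype))) :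
    conjSub τ N' 1 W = W := by
  ext x
  simp only [mem_conjSub, map_one, Module.End.one_apply]
  exact ⟨fun ⟨w, hw, h⟩ => h ▸ hw, fun h => ⟨x, h, rfl⟩⟩

lemma conjSub_mono (g : N)
    {W W' : Submodule (MonoidAlgebra k N') (Representation.asModule (τ.comp N'.subtype))} (h : W ≤ W') :
    conjSub τ N' g W ≤ conjSub τ N' g W' := by
  intro x hx
  obtain ⟨w, hw, rfl⟩ := (mem_conjSub τ N').mp hx
  exact (mem_conjSub τ N').mpr ⟨w, h hw, rfl⟩

lemma conjSub_le_iff {g : N}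
    {W U : Submodule (MonoidAlgebra k N') (Representation.asModule (τ.comp N'.subtype))} :
    conjSub τ N' g W ≤ U ↔ W ≤ conjSub τ N' g⁻¹ U := by
  constructor
  · intro h w hw
    exact (mem_conjSub τ N').mpr ⟨τ g w, h ((mem_conjSub τ N').mpr ⟨w, hw, rfl⟩),
      by rw [tau_tau τ g⁻¹ g w, inv_mul_cancel, map_one]; rfl⟩
  · intro h x hx
    obtain ⟨w, hw, rfl⟩ := (mem_conjSub τ N').mp hx
    obtain ⟨u, hu, hu'⟩ := (mem_conjSub τ N').mp (h hw)
    rw [← hu', tau_tau τ g g⁻¹ u, mul_inv_cancel, map_one]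
    exact hu

/-- `conjSub` as an order isomorphism of the lattice of `k[N']`-submodules. -/
def conjOrderIso (g : N) :
    Submodule (MonoidAlgebra k N') (Representation.asModule (τ.comp N'.subtype)) ≃o
      Submodule (MonoidAlgebra k N') (Representation.asModule (τ.comp N'.subtype)) where
  toFun := conjSub τ N' g
  invFun := conjSub τ N' g⁻¹
  left_inv W := by rw [conjSub_conjSub, inv_mul_cancel, conjSub_one]
  right_inv W := by rw [conjSub_conjSub, mul_inv_cancel, conjSub_one]
  map_rel_iff' := by
    intro W W'
    constructor
    · intro h
      have h' : conjSub τ N' g W ≤ conjSub τ N' g W' := h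
      have h2 := conjSub_mono τ N' g⁻¹ h'
      rwa [conjSub_conjSub, conjSub_conjSub, inv_mul_cancel, conjSub_one, conjSub_one] at h2
    · intro h
      show conjSub τ N' g W ≤ conjSub τ N' g W'
      exact conjSub_mono τ N' g h

lemma conjSub_span (g : N) (S : Set (Representation.asModule (τ.comp N'.subtype))) :
    conjSub τ N' g (Submodule.span (MonoidAlgebra k N') S)
      = Submodule.span (MonoidAlgebra k N')
          {x : Representation.asModule (τ.comp N'.subtype) | ∃ s ∈ S, τ g (s : V) = (x : V)} := by
  refine le_antisymm ?_ ?_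
  · rw [conjSub_le_iff]
    refine Submodule.span_le.2 fun s hs => ?_
    refine (mem_conjSub τ N').mpr ⟨τ g s, Submodule.subset_span ⟨s, hs, rfl⟩, ?_⟩
    rw [tau_tau τ g⁻¹ g s, inv_mul_cancel, map_one]; rfl
  · refine Submodule.span_le.2 ?_
    rintro x ⟨s, hs, hs'⟩
    exact (mem_conjSub τ N').mpr ⟨s, Submodule.subset_span hs, hs'⟩

/-- The stabilizer in `N` of a `k[N']`-submodule, under the conjugation action on submodules. -/
def stab (W : Submodule (MonoidAlgebra k N') (Representation.asModule (τ.comp N'.subtype))) : Subgroup N where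
  carrier := {g | conjSub τ N' g W = W}
  one_mem' := conjSub_one τ N' W
  mul_mem' := by
    intro a b ha hb
    show conjSub τ N' (a * b) W = W
    rw [← conjSub_conjSub, hb, ha]
  inv_mem' := by
    intro a ha
    show conjSub τ N' a⁻¹ W = W
    conv_lhs => rw [← ha]
    rw [conjSub_conjSub, inv_mul_cancel, conjSub_one]

/-- A `k[N']`-submodule which is stable under all the operators `τ g` yields a
`k[N]`-submodule (with the same carrier). -/
def fullSub (K : Submodule (MonoidAlgebra k N') (Representation.asModule (τ.comp N'.subtype)))
    (hK : ∀ g : N, ∀ x ∈ K, τ g (x : V) ∈ K) : Submodule (MonoidAlgebra k N) τ.asModule where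
  carrier := {x : τ.asModule | x ∈ K}
  zero_mem' := K.zero_mem
  add_mem' := fun hx hy => K.add_mem hx hy
  smul_mem' := by
    intro a x hx
    induction a using MonoidAlgebra.induction_linear with
    | zero => rw [zero_smul]; exact K.zero_mem
    | add b c hb hc => rw [add_smul]; exact K.add_mem hb hc
    | single g c =>
      have h1 : (MonoidAlgebra.single g c : MonoidAlgebra k N) • x = c • τ g (x : V) := by
        show τ.asAlgebraHom (MonoidAlgebra.single g c) x = c • τ g (x : V)
        rw [Representation.asAlgebraHom_single]; rfl
      show (MonoidAlgebra.single g c : MonoidAlgebra k N) • x ∈ K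
      rw [h1]
      exact k_smul_mem τ N' K (hK g x hx)

end RestSemisimpleAux

open RestSemisimpleAux in
theorem restriction_semisimple_finite_length_of_central_character
    (k : Type) [Field k] (N : Type) [Group N]
    (Z : Subgroup N) (hZ : Z ≤ Subgroup.center N)
    (N' : Subgroup N) [N'.Normal]
    (V : Type) [AddCommGroup V] [Module k V]
    (τ : Representation k N V)
    (hsimple : IsSimpleModule (MonoidAlgebra k N) τ.asModule)
    (hZscalar : ∀ z : N, z ∈ Z → ∃ c : k, τ z = c • LinearMap.id)
    (hindex : (Z ⊔ N' ⊔ MonoidHom.ker τ).FiniteIndex) :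
    IsSemisimpleModule (MonoidAlgebra k N') (Representation.asModule (τ.comp N'.subtype)) ∧
      IsFiniteLength (MonoidAlgebra k N') (Representation.asModule (τ.comp N'.subtype)) := by
  classical
  open Pointwise in
  haveI := hsimple
  haveI := hindex
  set R := MonoidAlgebra k N' with hR
  set H : Subgroup N := Z ⊔ N' ⊔ MonoidHom.ker τ with hH
  haveI : Finite (N ⧸ H) := Subgroup.finite_quotient_of_finiteIndex (H := H)
  have hVnt : Nontrivial V := IsSimpleModule.nontrivial (MonoidAlgebra k N) τ.asModule
  haveI hkerN : (MonoidHom.ker τ).Normal := by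
    constructor
    intro n hn g
    have hn' : τ n = 1 := hn
    show τ (g * n * g⁻¹) = 1
    rw [map_mul, map_mul, hn', mul_one, ← map_mul, mul_inv_cancel, map_one]
  -- nonzero scalar for elements of Z
  have hZscalar' : ∀ z ∈ Z, ∃ c : k, c ≠ 0 ∧ τ z = c • LinearMap.id := by
    intro z hz
    obtain ⟨c, hc⟩ := hZscalar z hz
    refine ⟨c, fun hc0 => ?_, hc⟩
    obtain ⟨v, hv⟩ := exists_ne (0 : V)
    apply hv
    have h1 : τ z (τ z⁻¹ v) = v := by
      rw [tau_tau, mul_inv_cancel, map_one, Module.End.one_apply]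
    rw [hc, hc0] at h1
    simpa using h1.symm
  -- elements of H stabilize every k[N']-submodule
  have hHstab : ∀ (W : Submodule R (Representation.asModule (τ.comp N'.subtype))),
      H ≤ stab τ N' W := by
    intro W
    refine sup_le (sup_le ?_ ?_) ?_
    · intro z hz
      obtain ⟨c, hc0, hc⟩ := hZscalar' z hz
      show conjSub τ N' z W = W
      apply le_antisymm
      · intro x hx
        obtain ⟨w, hw, rfl⟩ := (mem_conjSub τ N').mp hx
        have h2 : τ z (w : V) = c • w := by rw [hc]; rfl
        rw [h2]
        exact k_smul_mem τ N' W hw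
      · intro x hx
        refine (mem_conjSub τ N').mpr ⟨c⁻¹ • x, k_smul_mem τ N' W hx, ?_⟩
        show τ z (c⁻¹ • (x : V)) = x
        rw [hc]
        show c • (c⁻¹ • (x : V)) = x
        rw [smul_smul, mul_inv_cancel₀ hc0, one_smul]
    · intro n hn
      show conjSub τ N' n W = W
      apply le_antisymm
      · intro x hx
        obtain ⟨w, hw, rfl⟩ := (mem_conjSub τ N').mp hx
        exact coe_smul_mem τ N' W n hn hw
      · intro x hx
        refine (mem_conjSub τ N').mpr
          ⟨τ n⁻¹ x, coe_smul_mem τ N' W n⁻¹ (N'.inv_mem hn) hx, ?_⟩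
        rw [tau_tau τ n n⁻¹ x, mul_inv_cancel, map_one]; rfl
    · intro g hg
      have hg1 : τ g = 1 := hg
      show conjSub τ N' g W = W
      apply le_antisymm
      · intro x hx
        obtain ⟨w, hw, rfl⟩ := (mem_conjSub τ N').mp hx
        have h2 : τ g (w : V) = w := LinearMap.congr_fun hg1 w
        rwa [h2]
      · intro x hx
        exact (mem_conjSub τ N').mpr ⟨x, hx, LinearMap.congr_fun hg1 x⟩
  -- the key finite generating family
  obtain ⟨v, hv0⟩ := exists_ne (0 : V)
  set f : N ⧸ H → (Representation.asModule (τ.comp N'.subtype)) := fun i => τ (Quotient.out i) v with hf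
  set P : Submodule R (Representation.asModule (τ.comp N'.subtype)) :=
    Submodule.span R (Set.range f) with hP
  -- every translate of v lies in P
  have key : ∀ x : N, (τ x v : (Representation.asModule (τ.comp N'.subtype))) ∈ P := by
    intro x
    set q : N ⧸ H := QuotientGroup.mk x with hq
    have hq1 : (QuotientGroup.mk (Quotient.out q) : N ⧸ H) = QuotientGroup.mk x := by
      rw [QuotientGroup.out_eq']
    have hq2 : (Quotient.out q)⁻¹ * x ∈ H := QuotientGroup.eq.mp hq1
    -- decompose (out q)⁻¹ * x = (z * n') * b with z ∈ Z, n' ∈ N', b ∈ ker τ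
    have hq3 : (Quotient.out q)⁻¹ * x ∈ ((Z ⊔ N' : Subgroup N) : Set N) * (MonoidHom.ker τ : Set N) := by
      rw [← Subgroup.mul_normal]
      exact hq2
    obtain ⟨a, ha, b, hb, hab⟩ := hq3
    have ha' : a ∈ ((Z : Set N) * (N' : Set N)) := by
      rw [← Subgroup.mul_normal]
      exact ha
    obtain ⟨z, hz, n', hn', hzn⟩ := ha'
    obtain ⟨c, hc0, hc⟩ := hZscalar' z hz
    have hmem : Quotient.out q * n' * (Quotient.out q)⁻¹ ∈ N' :=
      Subgroup.Normal.conj_mem ‹N'.Normal› n' hn' (Quotient.out q)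
    have hb1 : τ b = 1 := hb
    have hx : x = Quotient.out q * (z * (n' * b)) := by
      have : Quotient.out q * ((Quotient.out q)⁻¹ * x) = x := by group
      rw [← this, ← hab, ← hzn]
      group
    have hcalc : (τ x v : V)
        = (MonoidAlgebra.single (⟨Quotient.out q * n' * (Quotient.out q)⁻¹, hmem⟩ : N') c : R) • f q := by
      rw [single_smul, hf]
      show τ x v = c • τ (Quotient.out q * n' * (Quotient.out q)⁻¹) (τ (Quotient.out q) v)
      rw [tau_tau]
      have h2 : Quotient.out q * n' * (Quotient.out q)⁻¹ * Quotient.out q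
          = Quotient.out q * n' := by group
      rw [h2, hx]
      rw [← tau_tau τ (Quotient.out q) (z * (n' * b)) v]
      rw [← tau_tau τ z (n' * b) v]
      rw [← tau_tau τ n' b v]
      rw [hb1, Module.End.one_apply, hc]
      show τ (Quotient.out q) (c • (τ n' v)) = c • τ (Quotient.out q * n') v
      rw [map_smul, tau_tau]
    show (τ x v : (Representation.asModule (τ.comp N'.subtype))) ∈ P
    rw [hcalc]
    exact P.smul_mem _ (Submodule.subset_span ⟨q, rfl⟩)
  -- P is stable under all τ g, hence corresponds to a k[N]-submodule; by simplicity P = ⊤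
  have hPstab : ∀ g : N, ∀ x ∈ P, τ g (x : V) ∈ P := by
    intro g x hx
    have h1 : conjSub τ N' g P ≤ P := by
      rw [hP, conjSub_span]
      refine Submodule.span_le.2 ?_
      rintro _ ⟨_, ⟨i, rfl⟩, rfl⟩
      show τ g (τ (Quotient.out i) v) ∈ P
      rw [tau_tau]
      exact key _
    exact h1 ((mem_conjSub τ N').mpr ⟨x, hx, rfl⟩)
  have hvP : (v : (Representation.asModule (τ.comp N'.subtype))) ∈ P := by
    have h1 := key 1
    rwa [map_one, Module.End.one_apply] at h1
  have hPtop : P = ⊤ := by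
    rcases eq_bot_or_eq_top (fullSub τ N' P hPstab) with hbot | htop
    · exfalso
      apply hv0
      have h1 : (v : τ.asModule) ∈ fullSub τ N' P hPstab := hvP
      rw [hbot] at h1
      exact h1
    · ext x
      simp only [Submodule.mem_top, iff_true]
      have h1 : (x : τ.asModule) ∈ fullSub τ N' P hPstab := by rw [htop]; trivial
      exact h1
  have hfin : (⊤ : Submodule R (Representation.asModule (τ.comp N'.subtype))).FG := by
    rw [← hPtop]
    exact Submodule.fg_span (Set.finite_range f)
  haveI : IsCoatomic (Submodule R (Representation.asModule (τ.comp N'.subtype))) :=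
    CompleteLattice.coatomic_of_top_compact ((Submodule.fg_iff_compact _).mp hfin)
  haveI : Nontrivial (Representation.asModule (τ.comp N'.subtype)) := hVnt
  -- obtain a maximal submodule W
  obtain ⟨W, hW⟩ : ∃ W : Submodule R (Representation.asModule (τ.comp N'.subtype)), IsCoatom W := by
    rcases eq_top_or_exists_le_coatom (⊥ : Submodule R (Representation.asModule (τ.comp N'.subtype))) with h | ⟨W, hW, -⟩
    · exact absurd h bot_ne_top
    · exact ⟨W, hW⟩
  set Wg : N ⧸ H → Submodule R (Representation.asModule (τ.comp N'.subtype)) :=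
    fun i => conjSub τ N' (Quotient.out i) W with hWg
  have hWgcoatom : ∀ i, IsCoatom (Wg i) := fun i =>
    ((conjOrderIso τ N' (Quotient.out i)).isCoatom_iff W).mpr hW
  set K : Submodule R (Representation.asModule (τ.comp N'.subtype)) := ⨅ i, Wg i with hK
  -- K is stable under all τ g
  have hKstab : ∀ g : N, ∀ x ∈ K, τ g (x : V) ∈ K := by
    intro g x hx
    rw [hK]
    refine (Submodule.mem_iInf Wg).mpr fun i => ?_
    set i' : N ⧸ H := QuotientGroup.mk (g⁻¹ * Quotient.out i) with hi'
    have h1 : (QuotientGroup.mk (Quotient.out i') : N ⧸ H)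
        = QuotientGroup.mk (g⁻¹ * Quotient.out i) := by rw [QuotientGroup.out_eq']
    have h2 : (g⁻¹ * Quotient.out i)⁻¹ * Quotient.out i' ∈ H := QuotientGroup.eq.mp h1.symm
    have h3 : (Quotient.out i)⁻¹ * (g * Quotient.out i') ∈ H := by
      have : (Quotient.out i)⁻¹ * (g * Quotient.out i')
          = (g⁻¹ * Quotient.out i)⁻¹ * Quotient.out i' := by group
      rw [this]; exact h2
    have h4 : conjSub τ N' ((Quotient.out i)⁻¹ * (g * Quotient.out i')) W = W :=
      hHstab W h3
    have h5 : conjSub τ N' g (Wg i') = Wg i := by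
      rw [hWg, conjSub_conjSub]
      have : g * Quotient.out i' = Quotient.out i * ((Quotient.out i)⁻¹ * (g * Quotient.out i')) := by
        group
      rw [this, ← conjSub_conjSub, h4]
    have h6 : τ g (x : V) ∈ conjSub τ N' g (Wg i') := by
      refine (mem_conjSub τ N').mpr ⟨x, ?_, rfl⟩
      rw [hK, Submodule.mem_iInf] at hx
      exact hx i'
    rwa [h5] at h6
  -- by simplicity, K = ⊥
  have hKbot : K = ⊥ := by
    rcases eq_bot_or_eq_top (fullSub τ N' K hKstab) with hbot | htop
    · rw [eq_bot_iff]
      intro x hx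
      have h1 : (x : τ.asModule) ∈ fullSub τ N' K hKstab := hx
      rw [hbot] at h1
      exact h1
    · exfalso
      have h1 : K = ⊤ := by
        ext x
        simp only [Submodule.mem_top, iff_true]
        have : (x : τ.asModule) ∈ fullSub τ N' K hKstab := by rw [htop]; trivial
        exact this
      have h2 : K ≤ Wg (QuotientGroup.mk 1) := iInf_le _ _
      rw [h1, top_le_iff] at h2
      exact (hWgcoatom (QuotientGroup.mk 1)).1 h2
  -- the embedding into a finite product of simple modules
  set Φ : (Representation.asModule (τ.comp N'.subtype)) →ₗ[R]
      ((i : N ⧸ H) → (Representation.asModule (τ.comp N'.subtype)) ⧸ Wg i) :=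
    LinearMap.pi (fun i => (Wg i).mkQ) with hΦ
  have hinj : Function.Injective Φ := by
    rw [← LinearMap.ker_eq_bot, hΦ, LinearMap.ker_pi]
    simpa only [Submodule.ker_mkQ] using hKbot
  haveI hsimpleQ : ∀ i, IsSimpleModule R (Representation.asModule (τ.comp N'.subtype) ⧸ Wg i) :=
    fun i => isSimpleModule_iff_isCoatom.mpr (hWgcoatom i)
  haveI hssQ : ∀ i, IsSemisimpleModule R (Representation.asModule (τ.comp N'.subtype) ⧸ Wg i) := by
    intro i
    exact inferInstance
  haveI hpiSS : IsSemisimpleModule R ((i : N ⧸ H) → (Representation.asModule (τ.comp N'.subtype)) ⧸ Wg i) := by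
    refine isSemisimpleModule_of_isSemisimpleModule_submodule'
      (p := fun i => LinearMap.range (LinearMap.single R _ i)) (fun i => ?_)
      (LinearMap.iSup_range_single _ _)
    exact IsSemisimpleModule.range _
  have hfl : ∀ i, IsFiniteLength R (Representation.asModule (τ.comp N'.subtype) ⧸ Wg i) := by
    intro i
    have h1 : IsSimpleModule R
        ((Representation.asModule (τ.comp N'.subtype) ⧸ Wg i) ⧸ (⊥ : Submodule R _)) :=
      IsSimpleModule.congr (Submodule.quotEquivOfEqBot ⊥ rfl)
    exact .of_simple_quotient (N := ⊥) .of_subsingleton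
  haveI hnoe : ∀ i, IsNoetherian R (Representation.asModule (τ.comp N'.subtype) ⧸ Wg i) :=
    fun i => (isFiniteLength_iff_isNoetherian_isArtinian.mp (hfl i)).1
  haveI hart : ∀ i, IsArtinian R (Representation.asModule (τ.comp N'.subtype) ⧸ Wg i) :=
    fun i => (isFiniteLength_iff_isNoetherian_isArtinian.mp (hfl i)).2
  constructor
  · haveI hrange : IsSemisimpleModule R ↥(LinearMap.range Φ) :=
      IsSemisimpleModule.submodule R _
    exact IsSemisimpleModule.congr (M := ↥(LinearMap.range Φ)) (LinearEquiv.ofInjective Φ hinj)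
  · rw [isFiniteLength_iff_isNoetherian_isArtinian]
    exact ⟨isNoetherian_of_injective Φ hinj, isArtinian_of_injective Φ hinj⟩
end
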